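/- Let F : ℂ → ℂ be holomorphic on the punctured open unit disk D∖{0} and suppose that ∫_{D∖{0}} |F|² dA < ∞. Then for every natural number n ≥ 0 and every ρ ∈ (0,1) one has ∮_{|z|=ρ} zⁿ F(z) dz = 0; that is, all Laurent coefficients of F of negative index vanish. -/

import Mathlib

open MeasureTheory

section Aux
open Metric Set Filter intervalIntegral Real Topology


lemma meanValue_norm (F : ℂ → ℂ) {z : ℂ} {s : ℝ} (hs : 0 < s)
    (hd : ∀ w ∈ closedBall z s, DifferentiableAt ℂ F w) :
    2 * π * ‖F z‖ ≤ ∫ θ in (0:ℝ)..(2*π), ‖F (circleMap z s θ)‖ := by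
  have h := Complex.circleIntegral_sub_inv_smul_of_differentiable_on_off_countable
      (s := (∅ : Set ℂ)) (f := F) (c := z) (w := z) (R := s) countable_empty
      (Metric.mem_ball_self hs)
      (fun w hw => (hd w hw).continuousAt.continuousWithinAt)
      (fun x hx => hd x (ball_subset_closedBall hx.1))
  have h1 : ‖(2 * ↑π * Complex.I : ℂ) • F z‖ = 2 * π * ‖F z‖ := by
    simp [norm_smul, abs_of_nonneg Real.pi_pos.le]
  calc 2 * π * ‖F z‖ = ‖∮ w in C(z, s), (w - z)⁻¹ • F w‖ := by rw [h, h1]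
    _ ≤ ∫ θ in (0:ℝ)..(2*π), ‖deriv (circleMap z s) θ •
          ((circleMap z s θ - z)⁻¹ • F (circleMap z s θ))‖ := by
        rw [circleIntegral]
        exact intervalIntegral.norm_integral_le_integral_norm Real.two_pi_pos.le
    _ = ∫ θ in (0:ℝ)..(2*π), ‖F (circleMap z s θ)‖ := by
        refine intervalIntegral.integral_congr fun θ _ => ?_
        simp [norm_smul, deriv_circleMap, circleMap_sub_center, abs_of_pos hs,
          mul_comm, mul_assoc, inv_mul_cancel₀ (ne_of_gt hs)]
        rw [← mul_assoc, mul_inv_cancel₀ (ne_of_gt hs), one_mul]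

lemma mean_ball (F : ℂ → ℂ) {z : ℂ} {r : ℝ} (hr : 0 < r)
    (hd : ∀ w ∈ closedBall z r, DifferentiableAt ℂ F w) :
    π * r ^ 2 * ‖F z‖ ≤ ∫ w in ball z r, ‖F w‖ := by
  have hFc : ContinuousOn F (closedBall z r) :=
    fun w hw => (hd w hw).continuousAt.continuousWithinAt
  set G : ℝ × ℝ → ℝ := fun p => p.1 * ‖F (z + Complex.polarCoord.symm p)‖ with hG
  have hsymm : Continuous (fun p : ℝ × ℝ => Complex.polarCoord.symm p) := by
    simp only [Complex.polarCoord_symm_apply]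
    fun_prop
  have hmaps : MapsTo (fun p : ℝ × ℝ => z + Complex.polarCoord.symm p)
      (Icc 0 r ×ˢ Icc (-π) π) (closedBall z r) := by
    rintro ⟨s, θ⟩ ⟨hs, -⟩
    simp only [mem_closedBall, dist_eq_norm, add_sub_cancel_left]
    have : ‖Complex.polarCoord.symm (s, θ)‖ = |s| := Complex.norm_polarCoord_symm (s, θ)
    rw [this, abs_of_nonneg hs.1]
    exact hs.2
  have hGcont : ContinuousOn G (Icc 0 r ×ˢ Icc (-π) π) := by
    exact continuous_fst.continuousOn.mul
      ((hFc.comp ((continuous_const.add hsymm).continuousOn) hmaps).norm)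
  have hGint : IntegrableOn G (Ioo 0 r ×ˢ Ioo (-π) π) := by
    exact (hGcont.integrableOn_compact (isCompact_Icc.prod isCompact_Icc)).mono_set
      (prod_mono Ioo_subset_Icc_self Ioo_subset_Icc_self)
  set f : ℂ → ℝ := (ball (0:ℂ) r).indicator (fun u => ‖F (z + u)‖) with hf
  -- step 1
  have step1 : ∫ w in ball z r, ‖F w‖ = ∫ u, f u := by
    have hfh : ∀ u, f u = (ball z r).indicator (fun w => ‖F w‖) (z + u) := by
      intro u
      have hiff : z + u ∈ ball z r ↔ u ∈ ball (0:ℂ) r := by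
        simp [mem_ball, dist_eq_norm]
      by_cases hu : u ∈ ball (0:ℂ) r
      · rw [hf]; simp [indicator_of_mem hu, indicator_of_mem (hiff.mpr hu)]
      · rw [hf]; simp [indicator_of_notMem hu, indicator_of_notMem (hiff.not.mpr hu)]
    calc ∫ w in ball z r, ‖F w‖
        = ∫ w, (ball z r).indicator (fun w => ‖F w‖) w :=
          (MeasureTheory.integral_indicator measurableSet_ball).symm
      _ = ∫ u, (ball z r).indicator (fun w => ‖F w‖) (z + u) := by
          rw [integral_add_left_eq_self]
      _ = ∫ u, f u := by simp_rw [hfh]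
  -- step 2
  have step2 : ∫ u, f u
      = ∫ p in Complex.polarCoord.target, p.1 • f (Complex.polarCoord.symm p) :=
    (Complex.integral_comp_polarCoord_symm f).symm
  -- step 3
  have hSsub : Ioo 0 r ×ˢ Ioo (-π) π ⊆ Complex.polarCoord.target := by
    rw [Complex.polarCoord_target]
    exact prod_mono (Ioo_subset_Ioi_self) Subset.rfl
  have step3 : ∫ p in Complex.polarCoord.target, p.1 • f (Complex.polarCoord.symm p)
      = ∫ p in Ioo 0 r ×ˢ Ioo (-π) π, G p := by
    have hmt : MeasurableSet Complex.polarCoord.target :=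
      Complex.polarCoord.open_target.measurableSet
    have heq : ∀ p ∈ Complex.polarCoord.target,
        p.1 • f (Complex.polarCoord.symm p)
          = (Ioo 0 r ×ˢ Ioo (-π) π).indicator G p := by
      rintro ⟨s, θ⟩ hp
      rw [Complex.polarCoord_target] at hp
      obtain ⟨hs, hθ⟩ := hp
      have habs : ‖Complex.polarCoord.symm (s, θ)‖ = |s| := Complex.norm_polarCoord_symm (s, θ)
      by_cases hsr : s < r
      · have hmem : Complex.polarCoord.symm (s, θ) ∈ ball (0:ℂ) r := by
          rw [mem_ball_zero_iff, habs, abs_of_pos hs]; exact hsr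
        have hmemS : (s, θ) ∈ Ioo 0 r ×ˢ Ioo (-π) π := ⟨⟨hs, hsr⟩, hθ⟩
        rw [hf, indicator_of_mem hmem, indicator_of_mem hmemS]
        rfl
      · have hmem : Complex.polarCoord.symm (s, θ) ∉ ball (0:ℂ) r := by
          rw [mem_ball_zero_iff, habs, abs_of_pos hs]; exact fun h => hsr h
        have hmemS : (s, θ) ∉ Ioo 0 r ×ˢ Ioo (-π) π := by
          rintro ⟨⟨-, h2⟩, -⟩; exact hsr h2
        rw [hf, indicator_of_notMem hmem, indicator_of_notMem hmemS]
        simp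
    calc ∫ p in Complex.polarCoord.target, p.1 • f (Complex.polarCoord.symm p)
        = ∫ p in Complex.polarCoord.target,
            (Ioo 0 r ×ˢ Ioo (-π) π).indicator G p := setIntegral_congr_fun hmt heq
      _ = ∫ p in Complex.polarCoord.target ∩ (Ioo 0 r ×ˢ Ioo (-π) π), G p := by
          rw [setIntegral_indicator (measurableSet_Ioo.prod measurableSet_Ioo)]
      _ = ∫ p in Ioo 0 r ×ˢ Ioo (-π) π, G p := by
          rw [inter_eq_self_of_subset_right hSsub]
  -- step 4 (Fubini)
  have hGint' : Integrable G ((volume.restrict (Ioo 0 r)).prod (volume.restrict (Ioo (-π) π))) := by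
    rw [Measure.prod_restrict, ← Measure.volume_eq_prod]; exact hGint
  have step4 : ∫ p in Ioo 0 r ×ˢ Ioo (-π) π, G p
      = ∫ s in Ioo 0 r, ∫ θ in Ioo (-π) π, G (s, θ) := by
    rw [Measure.volume_eq_prod]
    exact setIntegral_prod G (by rwa [Measure.volume_eq_prod] at hGint)
  -- step 5 inner bound
  have step5 : ∀ s ∈ Ioo 0 r,
      2 * π * ‖F z‖ * s ≤ ∫ θ in Ioo (-π) π, G (s, θ) := by
    rintro s ⟨hs0, hsr⟩
    have hcm : ∀ θ : ℝ, z + Complex.polarCoord.symm (s, θ) = circleMap z s θ := by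
      intro θ
      rw [Complex.polarCoord_symm_apply, circleMap, Complex.exp_mul_I]
      push_cast
      ring
    have h1 : (∫ θ in Ioo (-π) π, G (s, θ))
        = s * ∫ θ in Ioo (-π) π, ‖F (circleMap z s θ)‖ := by
      simp_rw [hG, hcm]
      rw [MeasureTheory.integral_const_mul]
    have hper : Function.Periodic (fun θ => ‖F (circleMap z s θ)‖) (2 * π) := by
      intro θ; simp [periodic_circleMap z s θ]
    have h2 : (∫ θ in Ioo (-π) π, ‖F (circleMap z s θ)‖)
        = ∫ θ in (0:ℝ)..(2*π), ‖F (circleMap z s θ)‖ := by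
      rw [← integral_Ioc_eq_integral_Ioo,
        ← intervalIntegral.integral_of_le (by linarith [Real.pi_pos] : -π ≤ π)]
      have := hper.intervalIntegral_add_eq (-π) 0
      simpa [(by ring : -π + 2*π = π)] using this
    have h3 := meanValue_norm F hs0
      (fun w hw => hd w (closedBall_subset_closedBall hsr.le hw))
    rw [h1, h2]
    calc 2 * π * ‖F z‖ * s = s * (2 * π * ‖F z‖) := by ring
      _ ≤ s * ∫ θ in (0:ℝ)..(2*π), ‖F (circleMap z s θ)‖ :=
          mul_le_mul_of_nonneg_left h3 hs0.le
  -- step 6 outer bound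
  have hInner : IntegrableOn (fun s => ∫ θ in Ioo (-π) π, G (s, θ)) (Ioo 0 r) := by
    exact hGint'.integral_prod_left
  have hLow : IntegrableOn (fun s => 2 * π * ‖F z‖ * s) (Ioo 0 r) := by
    exact ((continuous_const.mul continuous_id).integrableOn_Icc (a := 0) (b := r)).mono_set
      Ioo_subset_Icc_self
  have step6 : 2 * π * ‖F z‖ * (r ^ 2 / 2)
      ≤ ∫ s in Ioo 0 r, ∫ θ in Ioo (-π) π, G (s, θ) := by
    have hmono := setIntegral_mono_on hLow hInner measurableSet_Ioo step5
    have hval : (∫ s in Ioo 0 r, 2 * π * ‖F z‖ * s)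
        = 2 * π * ‖F z‖ * (r ^ 2 / 2) := by
      rw [MeasureTheory.integral_const_mul, ← integral_Ioc_eq_integral_Ioo,
        ← intervalIntegral.integral_of_le hr.le, integral_id]
      ring
    linarith [hmono, hval.ge]
  calc π * r ^ 2 * ‖F z‖ = 2 * π * ‖F z‖ * (r ^ 2 / 2) := by ring
    _ ≤ ∫ s in Ioo 0 r, ∫ θ in Ioo (-π) π, G (s, θ) := step6
    _ = ∫ w in ball z r, ‖F w‖ := by rw [← step4, ← step3, ← step2, ← step1]

lemma sq_setIntegral_le {f : ℂ → ℝ} {s : Set ℂ}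
    (hV : 0 < (volume s).toReal)
    (hf : IntegrableOn f s) (hf2 : IntegrableOn (fun x => f x ^ 2) s) :
    (∫ x in s, f x) ^ 2 ≤ (volume s).toReal * ∫ x in s, f x ^ 2 := by
  have hfin : volume s < ⊤ := by
    by_contra h
    rw [not_lt, top_le_iff] at h
    simp [h] at hV
  set V := (volume s).toReal with hVdef
  set A := ∫ x in s, f x with hA
  have hconst : IntegrableOn (fun _ : ℂ => A ^ 2) s := by
    exact integrableOn_const hfin.ne
  have key : (0:ℝ) ≤ ∫ x in s, (V * f x - A) ^ 2 :=
    integral_nonneg fun x => sq_nonneg _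
  have hexp : ∫ x in s, (V * f x - A) ^ 2
      = V ^ 2 * (∫ x in s, f x ^ 2) - 2 * V * A * A + A ^ 2 * V := by
    have : ∀ x, (V * f x - A) ^ 2
        = (V ^ 2 * f x ^ 2 - (2 * V * A) * f x) + A ^ 2 := fun x => by ring
    simp_rw [this]
    have hml : IntegrableOn (fun x => V ^ 2 * f x ^ 2) s := hf2.const_mul _
    have hmr : IntegrableOn (fun x => 2 * V * A * f x) s := hf.const_mul _
    have hsub : IntegrableOn (fun x => V ^ 2 * f x ^ 2 - 2 * V * A * f x) s := by
      have := hml.sub hmr; exact this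
    rw [integral_add hsub hconst, integral_sub hml hmr,
      MeasureTheory.integral_const_mul, MeasureTheory.integral_const_mul, setIntegral_const]
    simp [smul_eq_mul, ← hA, ← hVdef]
    rw [hVdef, measureReal_def]; ring
  nlinarith [key, hexp, hV]

lemma mean_sq (F : ℂ → ℂ) {z : ℂ} {r : ℝ} (hr : 0 < r)
    (hd : ∀ w ∈ closedBall z r, DifferentiableAt ℂ F w) :
    π * r ^ 2 * ‖F z‖ ^ 2 ≤ ∫ w in ball z r, ‖F w‖ ^ 2 := by
  have hFc : ContinuousOn F (closedBall z r) :=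
    fun w hw => (hd w hw).continuousAt.continuousWithinAt
  have hVol : (volume (ball z r)).toReal = π * r ^ 2 := by
    rw [Complex.volume_ball]
    rw [ENNReal.toReal_mul, ENNReal.toReal_pow, ENNReal.toReal_ofReal hr.le]
    simp [← NNReal.coe_real_pi]
    ring
  have hπr : (0:ℝ) < π * r ^ 2 := by positivity
  have hfint : IntegrableOn (fun w => ‖F w‖) (ball z r) :=
    ((hFc.norm).integrableOn_compact (isCompact_closedBall z r)).mono_set
      ball_subset_closedBall
  have hf2int : IntegrableOn (fun w => ‖F w‖ ^ 2) (ball z r) :=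
    ((hFc.norm.pow 2).integrableOn_compact (isCompact_closedBall z r)).mono_set
      ball_subset_closedBall
  have h1 := mean_ball F hr hd
  have h2 := sq_setIntegral_le (by rw [hVol]; exact hπr) hfint hf2int
  rw [hVol] at h2
  have h3 : (π * r ^ 2 * ‖F z‖) ^ 2 ≤ (∫ w in ball z r, ‖F w‖) ^ 2 :=
    pow_le_pow_left₀ (by positivity) h1 2
  nlinarith [h2, h3, hπr]

end Aux

section Main
open Metric Set Filter Real Topology

/-- For a holomorphic function on the punctured unit disk with finite
`L²`-norm, all Laurent coefficients of negative index vanish: for every `n : ℕ` and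
every radius `ρ ∈ (0,1)`, the circle integral `∮_{|z|=ρ} zⁿ F(z) dz` is zero. -/
theorem laurent_negative_coefficients_vanish
    (F : ℂ → ℂ)
    (hF : ∀ z ∈ Metric.ball (0 : ℂ) 1 \ {0}, DifferentiableAt ℂ F z)
    (hL2 : (∫⁻ z in Metric.ball (0 : ℂ) 1 \ {0},
        ENNReal.ofReal (‖F z‖ ^ 2)) < ⊤) :
    ∀ (n : ℕ) (ρ : ℝ), ρ ∈ Set.Ioo (0 : ℝ) 1 →
      (∮ z in C(0, ρ), z ^ n * F z) = 0 := by
  set D : Set ℂ := Metric.ball (0 : ℂ) 1 \ {0} with hDdef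
  have hDmeas : MeasurableSet D :=
    (Metric.isOpen_ball.sdiff isClosed_singleton).measurableSet
  have hD : DifferentiableOn ℂ F D := fun z hz => (hF z hz).differentiableWithinAt
  -- the tail measure
  set g : ℂ → ENNReal := D.indicator (fun w => ENNReal.ofReal (‖F w‖ ^ 2)) with hgdef
  set μ0 := volume.withDensity g with hμ0def
  have hμ0 : ∀ {s : Set ℂ}, MeasurableSet s → s ⊆ D →
      μ0 s = ∫⁻ w in s, ENNReal.ofReal (‖F w‖ ^ 2) := by
    intro s hs hsub
    rw [hμ0def, withDensity_apply g hs]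
    refine setLIntegral_congr_fun hs (fun w hw => ?_)
    exact indicator_of_mem (hsub hw) _
  set S : ℕ → Set ℂ := fun k => Metric.ball (0:ℂ) (1/(k+1)) \ {0} with hSdef
  have hSmeas : ∀ k, MeasurableSet (S k) := fun k =>
    (Metric.isOpen_ball.sdiff isClosed_singleton).measurableSet
  have hSsubD : ∀ k, S k ⊆ D := by
    intro k
    apply diff_subset_diff_left
    apply Metric.ball_subset_ball
    rw [div_le_one (by positivity)]
    simp
  have hS0 : μ0 (S 0) ≠ ⊤ := by
    rw [hμ0 (hSmeas 0) (hSsubD 0)]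
    refine ne_top_of_le_ne_top hL2.ne (lintegral_mono_set ?_)
    apply diff_subset_diff_left
    apply Metric.ball_subset_ball
    norm_num
  have hanti : Antitone S := by
    intro k l hkl
    apply diff_subset_diff_left
    apply Metric.ball_subset_ball
    apply one_div_le_one_div_of_le (by positivity)
    have : (k:ℝ) ≤ l := Nat.cast_le.mpr hkl
    linarith
  have hiInter : ⋂ k, S k = ∅ := by
    ext w
    simp only [mem_iInter, mem_empty_iff_false, iff_false, not_forall]
    by_contra h
    push_neg at h
    have hw0 : w ≠ 0 := (h 0).2
    have hwpos : 0 < ‖w‖ := norm_pos_iff.mpr hw0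
    obtain ⟨k, hk⟩ := exists_nat_one_div_lt hwpos
    have := (h k).1
    rw [mem_ball_zero_iff] at this
    linarith
  have htend : Tendsto (μ0 ∘ S) atTop (𝓝 0) := by
    have := tendsto_measure_iInter_atTop (μ := μ0)
      (fun k => (hSmeas k).nullMeasurableSet) hanti ⟨0, hS0⟩
    rwa [hiInter, measure_empty] at this
  -- little o statement
  have hFo : F =o[𝓝[≠] (0:ℂ)] fun z => z⁻¹ := by
    rw [Asymptotics.isLittleO_iff]
    intro c hc
    obtain ⟨k, hk⟩ : ∃ k, μ0 (S k) < ENNReal.ofReal (π * c ^ 2 / 4) := by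
      have hpos : (0:ENNReal) < ENNReal.ofReal (π * c ^ 2 / 4) :=
        ENNReal.ofReal_pos.mpr (by positivity)
      exact (htend.eventually_lt_const hpos).exists
    have hev : ∀ᶠ z : ℂ in 𝓝[≠] 0, ‖z‖ < 2/(3*(k+1)) := by
      have hmem : Metric.ball (0:ℂ) (2/(3*(k+1))) ∈ 𝓝[≠] (0:ℂ) :=
        nhdsWithin_le_nhds (Metric.ball_mem_nhds _ (by positivity))
      filter_upwards [hmem] with z hz
      simpa [mem_ball_zero_iff] using hz
    filter_upwards [hev, self_mem_nhdsWithin] with z hz hz0'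
    have hz0 : z ≠ 0 := hz0'
    have hzn : (0:ℝ) < ‖z‖ := norm_pos_iff.mpr hz0
    set r : ℝ := ‖z‖/2 with hrdef
    have hr : 0 < r := by positivity
    have hkpos : (0:ℝ) < (k:ℝ) + 1 := by positivity
    have hz32 : 3/2 * ‖z‖ < 1/((k:ℝ)+1) := by
      rw [lt_div_iff₀ (by positivity : (0:ℝ) < 3*((k:ℝ)+1))] at hz
      rw [lt_div_iff₀ hkpos]
      nlinarith [hz]
    have hkey : Metric.closedBall z r ⊆ S k := by
      intro w hw
      rw [Metric.mem_closedBall, dist_eq_norm] at hw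
      constructor
      · rw [mem_ball_zero_iff]
        calc ‖w‖ = ‖(w - z) + z‖ := by ring_nf
          _ ≤ ‖w - z‖ + ‖z‖ := norm_add_le _ _
          _ ≤ r + ‖z‖ := by linarith
          _ = 3/2 * ‖z‖ := by rw [hrdef]; ring
          _ < 1/((k:ℝ)+1) := hz32
      · simp only [mem_singleton_iff]
        intro hweq
        rw [hweq] at hw
        simp only [zero_sub, norm_neg] at hw
        rw [hrdef] at hw
        linarith
    have hd' : ∀ w ∈ closedBall z r, DifferentiableAt ℂ F w :=
      fun w hw => hF w (hSsubD k (hkey hw))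
    have hmain := mean_sq F hr hd'
    -- compare with the tail
    have hFcont : ContinuousOn (fun w => ‖F w‖ ^ 2) (ball z r) :=
      (ContinuousOn.norm (fun w hw =>
        (hd' w (ball_subset_closedBall hw)).continuousAt.continuousWithinAt)).pow 2
    have heq : ∫ w in ball z r, ‖F w‖ ^ 2
        = (∫⁻ w in ball z r, ENNReal.ofReal (‖F w‖ ^ 2)).toReal := by
      rw [integral_eq_lintegral_of_nonneg_ae (ae_of_all _ fun w => by positivity)
        (hFcont.aestronglyMeasurable measurableSet_ball)]
    have hle1 : (∫⁻ w in ball z r, ENNReal.ofReal (‖F w‖ ^ 2)) ≤ μ0 (S k) := by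
      rw [hμ0 (hSmeas k) (hSsubD k)]
      exact lintegral_mono_set (fun w hw => hkey (ball_subset_closedBall hw))
    have htoReal : (μ0 (S k)).toReal < π * c ^ 2 / 4 :=
      (ENNReal.lt_ofReal_iff_toReal_lt hk.ne_top).mp hk
    have hreal : ∫ w in ball z r, ‖F w‖ ^ 2 < π * c ^ 2 / 4 := by
      rw [heq]
      exact lt_of_le_of_lt (ENNReal.toReal_mono hk.ne_top hle1) htoReal
    have hsq : (‖z‖ * ‖F z‖) ^ 2 < c ^ 2 := by
      have : π * r ^ 2 * ‖F z‖ ^ 2 < π * c ^ 2 / 4 := lt_of_le_of_lt hmain hreal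
      rw [hrdef] at this
      nlinarith [Real.pi_pos, this, sq_nonneg (‖F z‖)]
    have h4 : ‖z‖ * ‖F z‖ < c :=
      lt_of_pow_lt_pow_left₀ 2 hc.le hsq
    rw [norm_inv, ← div_eq_mul_inv, le_div_iff₀ hzn]
    nlinarith [h4]
  -- constant little o
  have hconst : (fun _ : ℂ => F 0) =o[𝓝[≠] (0:ℂ)] fun z => z⁻¹ := by
    rw [Asymptotics.isLittleO_const_left]
    right
    have h1 : Tendsto (fun z : ℂ => ‖z‖) (𝓝[≠] 0) (𝓝[>] 0) := by
      rw [tendsto_nhdsWithin_iff]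
      constructor
      · exact (continuous_norm.tendsto' 0 0 (by simp)).mono_left nhdsWithin_le_nhds
      · filter_upwards [self_mem_nhdsWithin] with z hz
        exact norm_pos_iff.mpr hz
    have h2 := tendsto_inv_nhdsGT_zero.comp h1
    have : (fun z : ℂ => ‖z‖⁻¹) = (fun x : ℝ => x⁻¹) ∘ (fun z : ℂ => ‖z‖) := rfl
    simp only [Function.comp_def] at h2 ⊢
    convert h2 using 1
    funext z
    simp [norm_inv]
  have ho : (fun z => F z - F 0) =o[𝓝[≠] (0:ℂ)] fun z => (z - 0)⁻¹ := by
    simpa using hFo.sub hconst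
  have hG := Complex.differentiableOn_update_limUnder_of_isLittleO
    (Metric.ball_mem_nhds (0:ℂ) one_pos) hD ho
  set G : ℂ → ℂ := Function.update F 0 (limUnder (𝓝[≠] (0:ℂ)) F) with hGdef
  intro n ρ hρ
  obtain ⟨hρ0, hρ1⟩ := hρ
  have hGd : DifferentiableOn ℂ (fun z => z ^ n * G z) (Metric.ball (0:ℂ) 1) :=
    (differentiable_pow n).differentiableOn.mul hG
  have h0 : (∮ z in C(0, ρ), z ^ n * G z) = 0 := by
    apply Complex.circleIntegral_eq_zero_of_differentiable_on_off_countable hρ0.le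
      countable_empty
    · exact hGd.continuousOn.mono (closedBall_subset_ball hρ1)
    · intro w hw
      exact hGd.differentiableAt (Metric.isOpen_ball.mem_nhds
        (Metric.ball_subset_ball hρ1.le hw.1))
  refine Eq.trans ?_ h0
  apply circleIntegral.integral_congr hρ0.le
  intro w hw
  have hw0 : w ≠ 0 := by
    rw [mem_sphere_zero_iff_norm] at hw
    intro h; rw [h] at hw; simp at hw; linarith
  have hGw : G w = F w := Function.update_of_ne hw0 _ _
  simp only [hGw]

end Main
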